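/- Let n ≥ 2 and let B be a convex body in Minkowski space E^{n+1}_1. Let N and R be the normal cone (with respect to the Minkowski form) and the recession cone of B. Assume that every element of N is spacelike, and that N has nonempty interior in ℝ^{n+1}. Then there exists a nonzero vector v₀ ∈ (int N) ∩ R. -/

import Mathlib

open Set

/-- The Minkowski bilinear form on `ℝ^(n+1)`:
`⟪x,y⟫ = x₁y₁ + ⋯ + xₙyₙ − x_{n+1}y_{n+1}`. -/
def mink {n : ℕ} (x y : EuclideanSpace ℝ (Fin (n + 1))) : ℝ :=
  (∑ i : Fin n, x i.castSucc * y i.castSucc) - x (Fin.last n) * y (Fin.last n)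

/-- The normal cone of a convex body `B` with respect to the Minkowski form. -/
def minkNormalCone {n : ℕ} (B : Set (EuclideanSpace ℝ (Fin (n + 1)))) :
    Set (EuclideanSpace ℝ (Fin (n + 1))) :=
  {w | w ≠ 0 ∧ ∃ p ∈ frontier B, ∀ x ∈ B, 0 ≤ mink (x - p) w}

/-- The recession cone of a convex body `B`. -/
def recessionCone {n : ℕ} (B : Set (EuclideanSpace ℝ (Fin n))) :
    Set (EuclideanSpace ℝ (Fin n)) :=
  {v | ∀ x ∈ B, ∀ t : ℝ, 0 ≤ t → x + t • v ∈ B}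

open scoped RealInnerProductSpace

section Aux
variable {n : ℕ}

def Jfun {n : ℕ} (x : EuclideanSpace ℝ (Fin (n + 1))) : EuclideanSpace ℝ (Fin (n + 1)) :=
  WithLp.toLp 2 (fun i => if i = Fin.last n then -x i else x i)

lemma Jfun_add (x y : EuclideanSpace ℝ (Fin (n + 1))) :
    Jfun (x + y) = Jfun x + Jfun y := by
  ext i; simp only [Jfun, PiLp.add_apply, PiLp.toLp_apply]; split <;> ring

lemma Jfun_smul (t : ℝ) (x : EuclideanSpace ℝ (Fin (n + 1))) :
    Jfun (t • x) = t • Jfun x := by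
  ext i; simp only [Jfun, PiLp.smul_apply, smul_eq_mul, PiLp.toLp_apply]; split <;> ring

lemma Jfun_invol (x : EuclideanSpace ℝ (Fin (n + 1))) : Jfun (Jfun x) = x := by
  ext i; simp only [Jfun, PiLp.toLp_apply]; split <;> simp

def Jlin {n : ℕ} : EuclideanSpace ℝ (Fin (n + 1)) →ₗ[ℝ] EuclideanSpace ℝ (Fin (n + 1)) where
  toFun := Jfun
  map_add' := Jfun_add
  map_smul' := Jfun_smul

lemma Jfun_cont : Continuous (Jfun (n := n)) :=
  (Jlin (n := n)).continuous_of_finiteDimensional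

noncomputable def Jhomeo {n : ℕ} : EuclideanSpace ℝ (Fin (n + 1)) ≃ₜ EuclideanSpace ℝ (Fin (n + 1)) where
  toFun := Jfun
  invFun := Jfun
  left_inv := Jfun_invol
  right_inv := Jfun_invol
  continuous_toFun := Jfun_cont
  continuous_invFun := Jfun_cont

lemma mink_eq_inner (x y : EuclideanSpace ℝ (Fin (n + 1))) :
    mink x y = ⟪x, Jfun y⟫ := by
  rw [mink, PiLp.inner_apply]
  simp only [RCLike.inner_apply, conj_trivial]
  rw [Fin.sum_univ_castSucc]
  have h1 : ∀ i : Fin n, Jfun y i.castSucc = y i.castSucc := by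
    intro i; simp [Jfun, (Fin.castSucc_lt_last i).ne]
  have h2 : Jfun y (Fin.last n) = -y (Fin.last n) := by simp [Jfun]
  simp only [h1, h2]
  have h3 : ∑ i : Fin n, y i.castSucc * x i.castSucc = ∑ i : Fin n, x i.castSucc * y i.castSucc :=
    Finset.sum_congr rfl (fun i _ => mul_comm _ _)
  linarith [h3]

lemma inner_J_symm (x y : EuclideanSpace ℝ (Fin (n + 1))) :
    ⟪x, Jfun y⟫ = ⟪Jfun x, y⟫ := by
  rw [← mink_eq_inner, real_inner_comm, ← mink_eq_inner]
  simp [mink, mul_comm]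

lemma Jfun_zero : Jfun (0 : EuclideanSpace ℝ (Fin (n + 1))) = 0 := by
  ext i; by_cases h : i = Fin.last n <;> simp [Jfun, h]

lemma Jfun_ne_zero {x : EuclideanSpace ℝ (Fin (n + 1))} (hx : x ≠ 0) : Jfun x ≠ 0 := by
  intro h
  apply hx
  rw [← Jfun_invol x, h, Jfun_zero]

def Scone' {n : ℕ} (B : Set (EuclideanSpace ℝ (Fin (n + 1)))) :
    Set (EuclideanSpace ℝ (Fin (n + 1))) :=
  {u | u ≠ 0 ∧ ∃ p ∈ frontier B, ∀ x ∈ B, 0 ≤ ⟪x - p, u⟫}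

def Kcone {n : ℕ} (B : Set (EuclideanSpace ℝ (Fin (n + 1)))) :
    Set (EuclideanSpace ℝ (Fin (n + 1))) :=
  {u | ∃ c : ℝ, ∀ x ∈ B, c ≤ ⟪x, u⟫}

lemma normal_eq_preimage (B : Set (EuclideanSpace ℝ (Fin (n + 1)))) :
    minkNormalCone B = Jfun ⁻¹' Scone' B := by
  ext w
  constructor
  · rintro ⟨hw0, p, hp, hwp⟩
    refine ⟨Jfun_ne_zero hw0, p, hp, fun x hx => ?_⟩
    have := hwp x hx
    rwa [mink_eq_inner] at this
  · rintro ⟨hw0, p, hp, hwp⟩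
    refine ⟨fun h => hw0 (by rw [h, Jfun_zero]), p, hp, fun x hx => ?_⟩
    rw [mink_eq_inner]
    exact hwp x hx

lemma Scone'_subset_Kcone (B : Set (EuclideanSpace ℝ (Fin (n + 1)))) :
    Scone' B ⊆ Kcone B := by
  rintro u ⟨hu0, p, hp, hup⟩
  exact ⟨⟪p, u⟫, fun x hx => by
    have := hup x hx
    rw [inner_sub_left] at this
    linarith⟩

lemma Kcone_zero_mem (B : Set (EuclideanSpace ℝ (Fin (n + 1)))) : 0 ∈ Kcone B :=
  ⟨0, fun x _ => by simp⟩

lemma Kcone_convex (B : Set (EuclideanSpace ℝ (Fin (n + 1)))) : Convex ℝ (Kcone B) := by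
  rintro u ⟨c₁, hc₁⟩ v ⟨c₂, hc₂⟩ a b ha hb hab
  refine ⟨a * c₁ + b * c₂, fun x hx => ?_⟩
  rw [inner_add_right, real_inner_smul_right, real_inner_smul_right]
  have h1 := mul_le_mul_of_nonneg_left (hc₁ x hx) ha
  have h2 := mul_le_mul_of_nonneg_left (hc₂ x hx) hb
  linarith

lemma Kcone_smul_mem (B : Set (EuclideanSpace ℝ (Fin (n + 1)))) {u : EuclideanSpace ℝ (Fin (n + 1))}
    (hu : u ∈ Kcone B) {t : ℝ} (ht : 0 ≤ t) : t • u ∈ Kcone B := by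
  obtain ⟨c, hc⟩ := hu
  refine ⟨t * c, fun x hx => ?_⟩
  rw [real_inner_smul_right]
  exact mul_le_mul_of_nonneg_left (hc x hx) ht

lemma Kcone_add_mem (B : Set (EuclideanSpace ℝ (Fin (n + 1)))) {u v : EuclideanSpace ℝ (Fin (n + 1))}
    (hu : u ∈ Kcone B) (hv : v ∈ Kcone B) : u + v ∈ Kcone B := by
  obtain ⟨c₁, hc₁⟩ := hu
  obtain ⟨c₂, hc₂⟩ := hv
  exact ⟨c₁ + c₂, fun x hx => by
    rw [inner_add_right]
    exact add_le_add (hc₁ x hx) (hc₂ x hx)⟩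

/-- Attainment: a nonzero interior point of the barrier cone is an inward normal. -/
lemma interior_Kcone_subset_Scone' {B : Set (EuclideanSpace ℝ (Fin (n + 1)))}
    (hclosed : IsClosed B) (hint : (interior B).Nonempty) :
    interior (Kcone B) \ {0} ⊆ Scone' B := by
  rintro u ⟨huK, hu0⟩
  rw [mem_singleton_iff] at hu0
  obtain ⟨ε, hε, hball⟩ := Metric.isOpen_iff.mp isOpen_interior u huK
  have hdir : ∀ w : EuclideanSpace ℝ (Fin (n + 1)), ‖w‖ < ε → u + w ∈ Kcone B := by
    intro w hw
    refine interior_subset (hball ?_)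
    rw [Metric.mem_ball, dist_eq_norm, add_sub_cancel_left]
    exact hw
  have h1 : ∀ i : Fin (n + 1), ∃ c : ℝ, ∀ x ∈ B, c ≤ ⟪x, u⟫ + (ε / 2) * x i := by
    intro i
    obtain ⟨c, hc⟩ := hdir ((ε / 2) • EuclideanSpace.single i (1 : ℝ))
      (by rw [norm_smul, EuclideanSpace.norm_single, norm_one, mul_one, Real.norm_eq_abs,
        abs_div, abs_of_pos hε]; simp; linarith)
    refine ⟨c, fun x hx => ?_⟩
    have := hc x hx
    rw [inner_add_right, real_inner_smul_right, EuclideanSpace.inner_single_right] at this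
    simpa using this
  have h2 : ∀ i : Fin (n + 1), ∃ c : ℝ, ∀ x ∈ B, c ≤ ⟪x, u⟫ - (ε / 2) * x i := by
    intro i
    obtain ⟨c, hc⟩ := hdir (-((ε / 2) • EuclideanSpace.single i (1 : ℝ)))
      (by rw [norm_neg, norm_smul, EuclideanSpace.norm_single, norm_one, mul_one,
        Real.norm_eq_abs, abs_div, abs_of_pos hε]; simp; linarith)
    refine ⟨c, fun x hx => ?_⟩
    have := hc x hx
    rw [inner_add_right, inner_neg_right, real_inner_smul_right,
      EuclideanSpace.inner_single_right] at this
    simp only [conj_trivial, one_mul] at this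
    linarith
  choose c₁ hc₁ using h1
  choose c₂ hc₂ using h2
  obtain ⟨x₀, hx₀i⟩ := hint
  have hx₀ : x₀ ∈ B := interior_subset hx₀i
  set r : ℝ := ⟪x₀, u⟫ with hr
  set T : Set (EuclideanSpace ℝ (Fin (n + 1))) := {x ∈ B | ⟪x, u⟫ ≤ r} with hT
  have hx₀T : x₀ ∈ T := ⟨hx₀, le_refl r⟩
  have hinner_cont : Continuous fun x : EuclideanSpace ℝ (Fin (n + 1)) => ⟪x, u⟫ :=
    continuous_id.inner continuous_const
  have hTclosed : IsClosed T := hclosed.inter (isClosed_le hinner_cont continuous_const)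
  have hTbdd : Bornology.IsBounded T := by
    rw [isBounded_iff_forall_norm_le]
    refine ⟨Real.sqrt (∑ i, ((2 / ε) * max (r - c₁ i) (r - c₂ i)) ^ 2), fun x hx => ?_⟩
    rw [EuclideanSpace.norm_eq]
    apply Real.sqrt_le_sqrt
    apply Finset.sum_le_sum
    intro i _
    have hib : |x i| ≤ (2 / ε) * max (r - c₁ i) (r - c₂ i) := by
      obtain ⟨hxB, hxr⟩ := hx
      have e1 := hc₁ i x hxB
      have e2 := hc₂ i x hxB
      have hid : ∀ y : ℝ, 2 / ε * (ε / 2 * y) = y := by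
        intro y; field_simp
      rw [abs_le]
      constructor
      · have hlow : c₁ i - r ≤ ε / 2 * x i := by linarith
        have h' := mul_le_mul_of_nonneg_left hlow (by positivity : (0:ℝ) ≤ 2 / ε)
        rw [hid] at h'
        have hmax : -(2 / ε * max (r - c₁ i) (r - c₂ i)) ≤ 2 / ε * (c₁ i - r) := by
          rw [← mul_neg]
          apply mul_le_mul_of_nonneg_left _ (by positivity)
          have := le_max_left (r - c₁ i) (r - c₂ i)
          linarith
        linarith
      · have hup : ε / 2 * x i ≤ r - c₂ i := by linarith
        have h' := mul_le_mul_of_nonneg_left hup (by positivity : (0:ℝ) ≤ 2 / ε)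
        rw [hid] at h'
        have hmax : 2 / ε * (r - c₂ i) ≤ 2 / ε * max (r - c₁ i) (r - c₂ i) :=
          mul_le_mul_of_nonneg_left (le_max_right _ _) (by positivity)
        linarith
    calc ‖x i‖ ^ 2 = |x i| ^ 2 := by rw [Real.norm_eq_abs]
      _ ≤ ((2 / ε) * max (r - c₁ i) (r - c₂ i)) ^ 2 := by
          apply pow_le_pow_left₀ (abs_nonneg _) hib
  have hTcompact : IsCompact T := Metric.isCompact_iff_isClosed_bounded.mpr ⟨hTclosed, hTbdd⟩
  obtain ⟨p, hpT, hpmin⟩ := hTcompact.exists_isMinOn ⟨x₀, hx₀T⟩ hinner_cont.continuousOn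
  have hglob : ∀ x ∈ B, ⟪p, u⟫ ≤ ⟪x, u⟫ := by
    intro x hx
    by_cases hc : ⟪x, u⟫ ≤ r
    · exact hpmin ⟨hx, hc⟩
    · have h1 : ⟪p, u⟫ ≤ r := hpT.2
      push_neg at hc
      linarith
  have hpint : p ∉ interior B := by
    intro hpint
    obtain ⟨δ, hδ, hball2⟩ := Metric.isOpen_iff.mp isOpen_interior p hpint
    have hu' : (0:ℝ) < ‖u‖ := norm_pos_iff.mpr hu0
    set x' := p - (δ / (2 * ‖u‖)) • u with hx'
    have hx'B : x' ∈ B := by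
      apply interior_subset (hball2 _)
      rw [Metric.mem_ball, dist_eq_norm, hx']
      have : p - (δ / (2 * ‖u‖)) • u - p = -((δ / (2 * ‖u‖)) • u) := by abel
      rw [this, norm_neg, norm_smul, Real.norm_eq_abs,
        abs_of_pos (by positivity)]
      have heq : δ / (2 * ‖u‖) * ‖u‖ = δ / 2 := by field_simp
      rw [heq]
      linarith
    have := hglob x' hx'B
    rw [hx', inner_sub_left, real_inner_smul_left, real_inner_self_eq_norm_sq] at this
    have hpos : 0 < δ / (2 * ‖u‖) * ‖u‖ ^ 2 := by positivity
    linarith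
  refine ⟨hu0, p, ?_, fun x hx => ?_⟩
  · rw [hclosed.frontier_eq]
    exact ⟨hpT.1, hpint⟩
  · rw [inner_sub_left]
    linarith [hglob x hx]

/-- Supporting hyperplane separating a point outside a closed convex body. -/
lemma exists_support {B : Set (EuclideanSpace ℝ (Fin (n + 1)))}
    (hconv : Convex ℝ B) (hclosed : IsClosed B) (hB : B.Nonempty)
    {y : EuclideanSpace ℝ (Fin (n + 1))} (hy : y ∉ B) :
    ∃ u p, u ∈ Scone' B ∧ (∀ x ∈ B, 0 ≤ ⟪x - p, u⟫) ∧ ⟪y - p, u⟫ < 0 := by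
  obtain ⟨p, hpB, hmin⟩ :=
    exists_norm_eq_iInf_of_complete_convex hB hclosed.isComplete hconv y
  rw [norm_eq_iInf_iff_real_inner_le_zero hconv hpB] at hmin
  have hyp : y ≠ p := fun h => hy (h ▸ hpB)
  have hypn : (0:ℝ) < ‖y - p‖ := by
    rw [norm_pos_iff, sub_ne_zero]; exact hyp
  set u := p - y with hu
  have hu0 : u ≠ 0 := by
    rw [hu, sub_ne_zero]; exact fun h => hyp h.symm
  have hup : ∀ x ∈ B, 0 ≤ ⟪x - p, u⟫ := by
    intro x hx
    have := hmin x hx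
    have h2 : ⟪x - p, u⟫ = -⟪y - p, x - p⟫ := by
      rw [hu, real_inner_comm]
      rw [show p - y = -(y - p) by abel, inner_neg_left]
    rw [h2]
    linarith
  have hlt : ⟪y - p, u⟫ < 0 := by
    rw [hu, show p - y = -(y - p) by abel, inner_neg_right, real_inner_self_eq_norm_sq]
    have : 0 < ‖y - p‖ ^ 2 := by positivity
    linarith
  have hpfr : p ∈ frontier B := by
    rw [hclosed.frontier_eq]
    refine ⟨hpB, fun hpint => ?_⟩
    obtain ⟨δ, hδ, hball⟩ := Metric.isOpen_iff.mp isOpen_interior p hpint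
    set t : ℝ := δ / (2 * ‖y - p‖) with htdef
    have ht : 0 < t := by positivity
    have hx'B : p + t • (y - p) ∈ B := by
      apply interior_subset (hball _)
      rw [Metric.mem_ball, dist_eq_norm]
      have : p + t • (y - p) - p = t • (y - p) := by abel
      rw [this, norm_smul, Real.norm_eq_abs, abs_of_pos ht, htdef]
      have heq : δ / (2 * ‖y - p‖) * ‖y - p‖ = δ / 2 := by field_simp
      rw [heq]; linarith
    have h0 := hup _ hx'B
    have heq : ⟪p + t • (y - p) - p, u⟫ = t * ⟪y - p, u⟫ := by
      rw [show p + t • (y - p) - p = t • (y - p) by abel, real_inner_smul_left]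
    rw [heq] at h0
    nlinarith
  exact ⟨u, p, ⟨hu0, p, hpfr, hup⟩, hup, hlt⟩

end Aux

theorem stmt_11 (n : ℕ) (hn : 2 ≤ n)
    (B : Set (EuclideanSpace ℝ (Fin (n + 1))))
    (hconv : Convex ℝ B) (hclosed : IsClosed B) (hint : (interior B).Nonempty)
    (hspace : ∀ w ∈ minkNormalCone B, 0 < mink w w)
    (hNint : (interior (minkNormalCone B)).Nonempty) :
    ∃ v₀ : EuclideanSpace ℝ (Fin (n + 1)),
      v₀ ≠ 0 ∧ v₀ ∈ interior (minkNormalCone B) ∩ recessionCone B := by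
    classical
  obtain ⟨wbar, hwbar⟩ := hNint
  set S := Scone' B with hS
  set K := Kcone B with hK
  have hNpre : interior (minkNormalCone B) = Jfun ⁻¹' interior S := by
    rw [normal_eq_preimage]
    exact (Jhomeo.preimage_interior S).symm
  have hwS : Jfun wbar ∈ interior S := by rw [hNpre] at hwbar; exact hwbar
  have hSK : S ⊆ K := Scone'_subset_Kcone B
  have hBne : B.Nonempty := hint.mono interior_subset
  have hq_pos : ∀ u ∈ S, 0 < ⟪u, Jfun u⟫ := by
    intro u hu
    have hmem : Jfun u ∈ minkNormalCone B := by
      rw [normal_eq_preimage]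
      show Jfun (Jfun u) ∈ S
      rwa [Jfun_invol]
    have := hspace _ hmem
    rwa [mink_eq_inner, Jfun_invol, real_inner_comm] at this
  have hintKS : interior K \ {0} ⊆ S := interior_Kcone_subset_Scone' hclosed hint
  have hq_int : ∀ u ∈ interior K, 0 ≤ ⟪u, Jfun u⟫ := by
    intro u hu
    by_cases h0 : u = 0
    · rw [h0, Jfun_zero]; simp
    · exact (hq_pos u (hintKS ⟨hu, h0⟩)).le
  obtain ⟨u₁, hu₁⟩ : (interior K).Nonempty := ⟨_, interior_mono hSK hwS⟩
  have hKconv : Convex ℝ K := Kcone_convex B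
  have hsubcl : K ⊆ closure (interior K) := by
    intro x hx
    rw [Metric.mem_closure_iff]
    intro ε hε
    set t : ℝ := min 1 (ε / (2 * (‖u₁ - x‖ + 1))) with htd
    have ht0 : 0 < t := lt_min one_pos (by positivity)
    have ht1 : t ≤ 1 := min_le_left _ _
    refine ⟨t • u₁ + (1 - t) • x, ?_, ?_⟩
    · exact hKconv.combo_interior_closure_mem_interior hu₁ (subset_closure hx) ht0
        (by linarith) (by ring)
    · have heq : x - (t • u₁ + (1 - t) • x) = t • (x - u₁) := by
        rw [sub_smul, one_smul, smul_sub]; abel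
      rw [dist_eq_norm, heq, norm_smul, Real.norm_eq_abs, abs_of_pos ht0]
      have h2 : t ≤ ε / (2 * (‖u₁ - x‖ + 1)) := min_le_right _ _
      have h3 : ‖x - u₁‖ = ‖u₁ - x‖ := norm_sub_rev _ _
      have h4 : t * ‖x - u₁‖ ≤ ε / (2 * (‖u₁ - x‖ + 1)) * (‖u₁ - x‖ + 1) := by
        rw [h3]
        exact mul_le_mul h2 (by linarith) (norm_nonneg _) (by positivity)
      have h5 : ε / (2 * (‖u₁ - x‖ + 1)) * (‖u₁ - x‖ + 1) = ε / 2 := by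
        have hpos : ‖u₁ - x‖ + 1 ≠ 0 := by positivity
        field_simp
      rw [h5] at h4
      linarith
  have hclsub : closure K ⊆ closure (interior K) :=
    closure_minimal hsubcl isClosed_closure
  have hq_cl : ∀ u ∈ closure K, 0 ≤ ⟪u, Jfun u⟫ := by
    intro u hu
    have hsub : closure (interior K) ⊆ {x | 0 ≤ ⟪x, Jfun x⟫} :=
      closure_minimal (fun x hx => hq_int x hx)
        (isClosed_le continuous_const (continuous_id.inner Jfun_cont))
    exact hsub (hclsub hu)
  set Cs : Set (EuclideanSpace ℝ (Fin (n + 1))) := {a | ∀ u ∈ K, 0 ≤ ⟪u, a⟫} with hCs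
  have hCs0 : (0 : EuclideanSpace ℝ (Fin (n + 1))) ∈ Cs := fun u _ => by simp
  have hCsconv : Convex ℝ Cs := by
    intro a ha b hb s t hs ht hst u hu
    rw [inner_add_right, real_inner_smul_right, real_inner_smul_right]
    have h1 := mul_nonneg hs (ha u hu)
    have h2 := mul_nonneg ht (hb u hu)
    linarith
  have hCs_smul : ∀ {a}, a ∈ Cs → ∀ {t : ℝ}, 0 ≤ t → t • a ∈ Cs := by
    intro a ha t ht u hu
    rw [real_inner_smul_right]
    exact mul_nonneg ht (ha u hu)
  have key : ∃ u₀ ∈ interior K, Jfun u₀ ∈ Cs := by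
    by_contra hcon
    push_neg at hcon
    set A : Set (EuclideanSpace ℝ (Fin (n + 1))) := Jfun '' interior K with hA
    have hAopen : IsOpen A := by
      have hAeq : A = Jfun ⁻¹' interior K := by
        ext a
        constructor
        · rintro ⟨x, hx, rfl⟩
          show Jfun (Jfun x) ∈ interior K
          rwa [Jfun_invol]
        · intro hx
          exact ⟨Jfun a, hx, Jfun_invol a⟩
      rw [hAeq]
      exact isOpen_interior.preimage Jfun_cont
    have hAconv : Convex ℝ A := hKconv.interior.linear_image Jlin
    have hdisj : Disjoint A Cs := by
      rw [Set.disjoint_left]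
      rintro a ⟨x, hx, rfl⟩ hmem
      exact hcon x hx hmem
    obtain ⟨f, r, hfA, hfC⟩ := geometric_hahn_banach_open hAconv hAopen hCsconv hdisj
    have hr0 : r ≤ 0 := by simpa using hfC 0 hCs0
    have hfC0 : ∀ a ∈ Cs, 0 ≤ f a := by
      intro a ha
      by_contra hneg
      push_neg at hneg
      have hfa : f a < 0 := hneg
      set t : ℝ := (|r| + 1) / (-f a) with htdef
      have ht : 0 < t := div_pos (by positivity) (by linarith)
      have hle := hfC (t • a) (hCs_smul ha ht.le)
      rw [map_smul, smul_eq_mul] at hle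
      have hfa0 : f a ≠ 0 := ne_of_lt hfa
      have hkey : t * f a = -(|r| + 1) := by
        have hh : f a / (-f a) = -1 := by rw [div_neg, div_self hfa0]
        calc t * f a = (|r| + 1) * (f a / (-f a)) := by rw [htdef]; ring
          _ = -(|r| + 1) := by rw [hh]; ring
      have habs := neg_abs_le r
      linarith
    set b := (InnerProductSpace.toDual ℝ (EuclideanSpace ℝ (Fin (n + 1)))).symm f with hbdef
    have hb : ∀ y, ⟪b, y⟫ = f y := fun y => InnerProductSpace.toDual_symm_apply
    have hbK : b ∈ closure K := by
      by_contra hbK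
      obtain ⟨g, s, hgC, hgb⟩ :=
        geometric_hahn_banach_closed_point hKconv.closure isClosed_closure hbK
      have hs0 : 0 < s := by
        have := hgC 0 (subset_closure (Kcone_zero_mem B))
        simpa using this
      have hgle : ∀ u ∈ K, g u ≤ 0 := by
        intro u hu
        by_contra hpos
        push_neg at hpos
        have hmem := hgC (((s + 1) / g u) • u)
          (subset_closure (Kcone_smul_mem B hu (by positivity)))
        rw [map_smul, smul_eq_mul, div_mul_cancel₀ _ (ne_of_gt hpos)] at hmem
        linarith
      set a := (InnerProductSpace.toDual ℝ (EuclideanSpace ℝ (Fin (n + 1)))).symm (-g)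
        with hadef
      have ha_app : ∀ y, ⟪a, y⟫ = -(g y) := by
        intro y
        rw [hadef]
        have := InnerProductSpace.toDual_symm_apply
          (𝕜 := ℝ) (E := EuclideanSpace ℝ (Fin (n + 1))) (y := -g) (x := y)
        rw [this]
        simp
      have haC : a ∈ Cs := by
        intro u hu
        rw [real_inner_comm, ha_app]
        linarith [hgle u hu]
      have h0f := hfC0 a haC
      rw [← hb, real_inner_comm, ha_app] at h0f
      linarith
    have hneg : ∀ u ∈ interior K, ⟪b, Jfun u⟫ < 0 := by
      intro u hu
      rw [hb]
      exact lt_of_lt_of_le (hfA _ ⟨u, hu, rfl⟩) hr0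
    have hble : ∀ u ∈ closure (interior K), ⟪b, Jfun u⟫ ≤ 0 := by
      have hsub : closure (interior K) ⊆ {x | ⟪b, Jfun x⟫ ≤ 0} :=
        closure_minimal (fun x hx => (hneg x hx).le)
          (isClosed_le (continuous_const.inner Jfun_cont) continuous_const)
      exact fun u hu => hsub hu
    have hqb : ⟪b, Jfun b⟫ = 0 :=
      le_antisymm (hble b (hclsub hbK)) (hq_cl b hbK)
    have hX : ⟪b, Jfun u₁⟫ < 0 := hneg u₁ hu₁
    set X : ℝ := ⟪b, Jfun u₁⟫ with hXdef
    set Q : ℝ := ⟪u₁, Jfun u₁⟫ with hQdef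
    have hQ : 0 ≤ Q := hq_int u₁ hu₁
    set t : ℝ := (Q + 1) / (-2 * X) with htdef
    have ht : 0 < t := div_pos (by linarith) (by linarith)
    have htbK : t • b + u₁ ∈ closure K := by
      have h1 : t • b ∈ closure K := by
        have himg := image_closure_subset_closure_image
          (f := fun z : EuclideanSpace ℝ (Fin (n + 1)) => t • z) (s := K)
          (continuous_const_smul t)
        have h2 : t • b ∈ closure ((fun z : EuclideanSpace ℝ (Fin (n + 1)) => t • z) '' K) :=
          himg ⟨b, hbK, rfl⟩
        refine closure_mono ?_ h2
        rintro y ⟨z, hz, rfl⟩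
        exact Kcone_smul_mem B hz ht.le
      have himg := image_closure_subset_closure_image
        (f := fun z : EuclideanSpace ℝ (Fin (n + 1)) => z + u₁) (s := K)
        (continuous_add_right u₁)
      have h2 : t • b + u₁ ∈ closure ((fun z : EuclideanSpace ℝ (Fin (n + 1)) => z + u₁) '' K) := by
        apply himg
        exact ⟨t • b, h1, rfl⟩
      refine closure_mono ?_ h2
      rintro y ⟨z, hz, rfl⟩
      exact Kcone_add_mem B hz (interior_subset hu₁)
    have hexp : ⟪t • b + u₁, Jfun (t • b + u₁)⟫ = t ^ 2 * ⟪b, Jfun b⟫ + 2 * t * X + Q := by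
      rw [Jfun_add, Jfun_smul]
      rw [inner_add_left, inner_add_right, inner_add_right,
        real_inner_smul_left, real_inner_smul_left, real_inner_smul_right,
        real_inner_smul_right]
      have hsym : ⟪u₁, Jfun b⟫ = X := by
        rw [hXdef, inner_J_symm, real_inner_comm]
      rw [hsym, ← hXdef, ← hQdef]
      ring
    have h0le := hq_cl _ htbK
    rw [hexp, hqb] at h0le
    have hX0 : X ≠ 0 := ne_of_lt hX
    have h2tX : 2 * t * X = -(Q + 1) := by
      have h2X : (2 * X) ≠ 0 := by
        intro h
        apply hX0
        linarith [hX]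
      have hh : (2 * X) / (-(2 * X)) = -1 := by rw [div_neg, div_self h2X]
      calc 2 * t * X = (Q + 1) * ((2 * X) / (-(2 * X))) := by rw [htdef]; ring
        _ = -(Q + 1) := by rw [hh]; ring
    rw [mul_zero, zero_add, h2tX] at h0le
    linarith
  obtain ⟨u₀, hu₀K, hu₀star⟩ := key
  have hu₀0 : u₀ ≠ 0 := by
    rintro rfl
    obtain ⟨ε, hε, hball⟩ := Metric.isOpen_iff.mp isOpen_interior 0 hu₀K
    set z : EuclideanSpace ℝ (Fin (n + 1)) :=
      (ε / 2) • EuclideanSpace.single (Fin.last n) (1 : ℝ) with hzdef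
    have hzK : z ∈ K := by
      apply interior_subset (hball _)
      rw [Metric.mem_ball, dist_eq_norm, sub_zero, hzdef, norm_smul,
        EuclideanSpace.norm_single, norm_one, mul_one, Real.norm_eq_abs, abs_div,
        abs_of_pos hε]
      simp
      linarith
    have hq0 := hq_cl z (subset_closure hzK)
    rw [← mink_eq_inner] at hq0
    have : mink z z = -(ε / 2) ^ 2 := by
      rw [mink]
      have hlast : z (Fin.last n) = ε / 2 := by
        rw [hzdef]
        simp [EuclideanSpace.single_apply]
      have hcast : ∀ i : Fin n, z i.castSucc = 0 := by
        intro i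
        rw [hzdef]
        simp [EuclideanSpace.single_apply, (Fin.castSucc_lt_last i).ne]
      rw [hlast]
      rw [Finset.sum_eq_zero (fun i _ => by rw [hcast i]; ring)]
      ring
    rw [this] at hq0
    nlinarith
  have hu₀S : u₀ ∈ interior S := by
    have hopen : IsOpen (interior K \ {0}) := isOpen_interior.sdiff isClosed_singleton
    exact interior_maximal hintKS hopen ⟨hu₀K, hu₀0⟩
  refine ⟨Jfun u₀, Jfun_ne_zero hu₀0, ?_, ?_⟩
  · rw [hNpre]
    show Jfun (Jfun u₀) ∈ interior S
    rwa [Jfun_invol]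
  · intro x hx t ht
    by_contra hy
    obtain ⟨u, p, huS, hup, hlt⟩ := exists_support hconv hclosed hBne hy
    have huC : 0 ≤ ⟪u, Jfun u₀⟫ := hu₀star u (hSK huS)
    have heq : x + t • Jfun u₀ - p = (x - p) + t • Jfun u₀ := by abel
    have hcontra : 0 ≤ ⟪x + t • Jfun u₀ - p, u⟫ := by
      rw [heq, inner_add_left, real_inner_smul_left]
      have h1 := hup x hx
      have h2 : 0 ≤ t * ⟪Jfun u₀, u⟫ := by
        rw [real_inner_comm]
        exact mul_nonneg ht huC
      linarith
    linarith
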